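/- Let S and R be finite sets, N a real S×R matrix, W = range(N), W^⊥ = ker(Nᵀ), and fix distinct i, o ∈ S. Then the supremum of the set {u_o : u ∈ W^⊥, and there exist w ∈ W and a strictly positive c̄ ∈ ℝ^S with u − e_i = diag(1/c̄)·w} is at least the supremum of the set {u_o : u is elementary in W^⊥ and u_i = 1} ∪ {0}. -/

import Mathlib

open Matrix

/-- A vector `v` is elementary in a linear subspace `V ⊆ ℝ^S` if `v ∈ V`, `v ≠ 0`, and no
nonzero `v' ∈ V` has support strictly contained in the support of `v`. -/
def IsElementary {S : Type*} (V : Submodule ℝ (S → ℝ)) (v : S → ℝ) : Prop :=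
  v ∈ V ∧ v ≠ 0 ∧ ∀ v' ∈ V, v' ≠ 0 → ¬ Function.support v' ⊂ Function.support v

set_option linter.unusedSectionVars false
set_option linter.unusedVariables false

open Module

namespace SupAux


variable {S : Type*} [Fintype S] [DecidableEq S]

noncomputable def suppF (v : S → ℝ) : Finset S :=
  @Finset.filter _ (fun s => v s ≠ 0) (Classical.decPred _) Finset.univ

lemma mem_suppF {v : S → ℝ} {s : S} : s ∈ suppF v ↔ v s ≠ 0 := by
  unfold suppF
  rw [@Finset.mem_filter _ _ (Classical.decPred _)]
  simp

/-- `e` is sign-conformal to `v`. -/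
def Conformal (v e : S → ℝ) : Prop := ∀ s, 0 ≤ e s * v s ∧ (v s = 0 → e s = 0)

lemma conformal_self (v : S → ℝ) : Conformal v v := fun s => ⟨mul_self_nonneg _, fun h => h⟩

lemma Conformal.trans {v v' e : S → ℝ} (h1 : Conformal v v') (h2 : Conformal v' e) :
    Conformal v e := by
  intro s
  rcases h1 s with ⟨h1a, h1b⟩
  rcases h2 s with ⟨h2a, h2b⟩
  refine ⟨?_, fun hv => h2b (h1b hv)⟩
  by_cases he : e s = 0
  · simp [he]
  · have hv' : v' s ≠ 0 := fun h => he (h2b h)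
    have hp1 : 0 < e s * v' s := lt_of_le_of_ne h2a (by simp [mul_ne_zero he hv', eq_comm])
    have hv : v s ≠ 0 := fun h => hv' (h1b h)
    have hp2 : 0 < v' s * v s := lt_of_le_of_ne h1a (by simp [mul_ne_zero hv' hv, eq_comm])
    nlinarith [mul_pos hp1 hp2, sq_nonneg (v' s)]

lemma Conformal.smul {v e : S → ℝ} (h : Conformal v e) {t : ℝ} (ht : 0 ≤ t) :
    Conformal v (t • e) := by
  intro s
  rcases h s with ⟨ha, hb⟩
  refine ⟨?_, fun hv => by simp [hb hv]⟩
  simp only [Pi.smul_apply, smul_eq_mul, mul_assoc]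
  exact mul_nonneg ht ha

lemma support_smul_of_ne {t : ℝ} (ht : t ≠ 0) (u : S → ℝ) :
    Function.support (t • u) = Function.support u := by
  ext s
  simp [Function.mem_support, Pi.smul_apply, smul_eq_mul, ht]

lemma elem_smul {V : Submodule ℝ (S → ℝ)} {u : S → ℝ} {t : ℝ} (ht : t ≠ 0)
    (h : IsElementary V u) : IsElementary V (t • u) := by
  obtain ⟨hm, hne, hmin⟩ := h
  refine ⟨V.smul_mem t hm, fun h0 => hne ?_, fun v' hv' hv'ne hss => ?_⟩
  · have := congrArg (fun x => t⁻¹ • x) h0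
    simpa [smul_smul, inv_mul_cancel₀ ht] using this
  · rw [support_smul_of_ne ht] at hss
    exact hmin v' hv' hv'ne hss

/-- Proportionality: any vector of `V` supported inside the support of an elementary vector
is a scalar multiple of it. -/
lemma elem_proportional {V : Submodule ℝ (S → ℝ)} {u v : S → ℝ}
    (hu : IsElementary V u) (hv : v ∈ V)
    (hss : Function.support v ⊆ Function.support u) : ∃ t : ℝ, v = t • u := by
  by_cases hv0 : v = 0
  · exact ⟨0, by simp [hv0]⟩
  obtain ⟨hum, hune, humin⟩ := hu
  have hsupp_eq : Function.support v = Function.support u := by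
    by_contra hne
    exact humin v hv hv0 (ssubset_of_ne_of_subset hne hss)
  obtain ⟨s₀, hs₀⟩ : ∃ s₀, u s₀ ≠ 0 := by
    by_contra h
    push_neg at h
    exact hune (funext fun s => h s)
  refine ⟨v s₀ / u s₀, ?_⟩
  by_contra hne
  set z : S → ℝ := v - (v s₀ / u s₀) • u with hz
  have hzV : z ∈ V := V.sub_mem hv (V.smul_mem _ hum)
  have hz0 : z ≠ 0 := fun h => hne (by rwa [hz, sub_eq_zero] at h)
  have hzs₀ : z s₀ = 0 := by
    simp [hz, Pi.sub_apply, Pi.smul_apply, smul_eq_mul, div_mul_cancel₀ _ hs₀]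
  have hzss : Function.support z ⊂ Function.support u := by
    constructor
    · intro s hs
      simp only [Function.mem_support, hz, Pi.sub_apply, Pi.smul_apply, smul_eq_mul] at hs ⊢
      intro hus
      apply hs
      have hvs : v s = 0 := by
        by_contra hvs
        have : s ∈ Function.support u := hsupp_eq ▸ Function.mem_support.2 hvs
        exact (Function.mem_support.1 this) hus
      simp [hvs, hus]
    · intro hsub
      exact (Function.mem_support.1 (hsub (Function.mem_support.2 hs₀))) hzs₀
  exact humin z hzV hz0 hzss

lemma card_zero_eq_zero {v : S → ℝ} (h : (suppF v).card = 0) : v = 0 := by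
  funext s
  by_contra hs
  have h1 : s ∈ suppF v := mem_suppF.2 hs
  rw [Finset.card_eq_zero] at h
  rw [h] at h1
  exact absurd h1 (Finset.notMem_empty s)

lemma reduce {V : Submodule ℝ (S → ℝ)} {v z : S → ℝ} (hv : v ∈ V) (hz : z ∈ V)
    (hss : Function.support z ⊂ Function.support v)
    (hneg : ∃ s, z s * v s < 0) :
    ∃ v', v' ∈ V ∧ v' ≠ 0 ∧ Conformal v v' ∧ (suppF v').card < (suppF v).card := by
  classical
  set T : Finset S := Finset.univ.filter (fun s => z s * v s < 0) with hT
  have hTne : T.Nonempty := by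
    obtain ⟨s, hs⟩ := hneg
    exact ⟨s, by simp [hT, hs]⟩
  obtain ⟨sm, hsmT, hmin⟩ := T.exists_min_image (fun s => -v s / z s) hTne
  have hsm : z sm * v sm < 0 := by simpa [hT] using hsmT
  have hzsm : z sm ≠ 0 := fun h => by simp [h] at hsm
  have hvsm : v sm ≠ 0 := fun h => by simp [h] at hsm
  set t₀ : ℝ := -v sm / z sm with ht₀
  have ht₀pos : 0 < t₀ := by
    rw [ht₀]
    have : -v sm / z sm = -(v sm * z sm) / (z sm * z sm) := by
      field_simp
    rw [this]
    apply div_pos (by nlinarith) (mul_self_pos.2 hzsm)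
  set v' : S → ℝ := v + t₀ • z with hv'
  have hv'V : v' ∈ V := V.add_mem hv (V.smul_mem _ hz)
  have happ : ∀ s, v' s = v s + t₀ * z s := fun s => rfl
  have hconf : Conformal v v' := by
    intro s
    by_cases hzs : z s = 0
    · refine ⟨by rw [happ, hzs]; ring_nf; positivity, fun h => by simp [happ, hzs, h]⟩
    · have hvs : v s ≠ 0 := by
        intro h
        exact (Function.mem_support.1 (hss.1 (Function.mem_support.2 hzs))) h
      refine ⟨?_, fun h => absurd h hvs⟩
      rw [happ]
      rcases lt_trichotomy (z s * v s) 0 with hzv | hzv | hzv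
      · have hsT : s ∈ T := by simp [hT, hzv]
        have h1 : t₀ ≤ -v s / z s := hmin s hsT
        rcases lt_or_gt_of_ne hzs with hzneg | hzpos
        · -- z s < 0 : v s > 0 ; t₀ * z s ≥ -v s
          have hvpos : 0 < v s := by nlinarith
          have h2 : -v s ≤ t₀ * z s := by
            rw [le_div_iff_of_neg hzneg] at h1
            linarith [h1]
          nlinarith
        · have hvneg : v s < 0 := by nlinarith
          have h2 : t₀ * z s ≤ -v s := by
            rw [le_div_iff₀ hzpos] at h1
            linarith [h1]
          nlinarith
      · exact absurd hzv (mul_ne_zero hzs hvs)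
      · nlinarith [mul_pos ht₀pos hzv, mul_self_nonneg (v s)]
  have hv'0 : v' ≠ 0 := by
    obtain ⟨s₁, hs₁v, hs₁z⟩ := Set.exists_of_ssubset hss
    have hz₁ : z s₁ = 0 := Function.notMem_support.1 hs₁z
    intro h
    have : v' s₁ = 0 := by rw [h]; rfl
    rw [happ, hz₁] at this
    exact (Function.mem_support.1 hs₁v) (by linarith [this])
  have hvsm' : v' sm = 0 := by
    rw [happ, ht₀]
    field_simp
    ring
  have hsub : suppF v' ⊆ (suppF v).erase sm := by
    intro s hs
    have hvs' : v' s ≠ 0 := mem_suppF.1 hs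
    rw [Finset.mem_erase]
    constructor
    · intro h; rw [h] at hvs'; exact hvs' hvsm'
    · rw [mem_suppF]
      intro h
      apply hvs'
      have hzs : z s = 0 := by
        by_contra hzs
        exact (Function.mem_support.1 (hss.1 (Function.mem_support.2 hzs))) h
      rw [happ, h, hzs]; ring
  have hsmmem : sm ∈ suppF v := mem_suppF.2 hvsm
  exact ⟨v', hv'V, hv'0, hconf,
    lt_of_le_of_lt (Finset.card_le_card hsub) (Finset.card_erase_lt_of_mem hsmmem)⟩

lemma exists_elem_conformal {V : Submodule ℝ (S → ℝ)} :
    ∀ (n : ℕ) (v : S → ℝ), (suppF v).card ≤ n → v ∈ V → v ≠ 0 →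
    ∃ e, IsElementary V e ∧ Conformal v e := by
  intro n
  induction n with
  | zero =>
    intro v hcard hv hv0
    exact absurd (card_zero_eq_zero (Nat.le_zero.1 hcard)) hv0
  | succ n ih =>
    intro v hcard hv hv0
    by_cases hel : IsElementary V v
    · exact ⟨v, hel, conformal_self v⟩
    · have hz : ∃ z ∈ V, z ≠ 0 ∧ Function.support z ⊂ Function.support v := by
        by_contra h
        push_neg at h
        exact hel ⟨hv, hv0, fun v' h1 h2 => h v' h1 h2⟩
      obtain ⟨z, hzV, hz0, hss⟩ := hz
      obtain ⟨s₀, hs₀⟩ : ∃ s₀, z s₀ ≠ 0 := by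
        by_contra h
        push_neg at h
        exact hz0 (funext h)
      have hvs₀ : v s₀ ≠ 0 := fun h =>
        (Function.mem_support.1 (hss.1 (Function.mem_support.2 hs₀))) h
      have hzs : ∃ z', z' ∈ V ∧ Function.support z' ⊂ Function.support v ∧
          ∃ s, z' s * v s < 0 := by
        rcases lt_trichotomy (z s₀ * v s₀) 0 with h | h | h
        · exact ⟨z, hzV, hss, s₀, h⟩
        · exact absurd h (mul_ne_zero hs₀ hvs₀)
        · have hsneg : Function.support (-z) = Function.support z := by
            ext s; simp [Function.mem_support]
          refine ⟨-z, V.neg_mem hzV, by rwa [hsneg], s₀, ?_⟩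
          simp only [Pi.neg_apply]
          nlinarith
      obtain ⟨z', hz'V, hss', s₁, hneg⟩ := hzs
      obtain ⟨v', hv'V, hv'0, hconf, hcard'⟩ := reduce hv hz'V hss' ⟨s₁, hneg⟩
      obtain ⟨e, he, hec⟩ := ih v' (by omega) hv'V hv'0
      exact ⟨e, he, hconf.trans hec⟩

lemma conformal_decomposition {V : Submodule ℝ (S → ℝ)} :
    ∀ (n : ℕ) (v : S → ℝ), (suppF v).card ≤ n → v ∈ V →
    ∃ L : List (S → ℝ), (∀ e ∈ L, IsElementary V e ∧ Conformal v e) ∧ L.sum = v := by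
  intro n
  induction n with
  | zero =>
    intro v hcard hv
    refine ⟨[], by simp, ?_⟩
    rw [List.sum_nil, card_zero_eq_zero (Nat.le_zero.1 hcard)]
  | succ n ih =>
    intro v hcard hv
    by_cases hv0 : v = 0
    · exact ⟨[], by simp, by rw [List.sum_nil, hv0]⟩
    obtain ⟨e, he, hec⟩ := exists_elem_conformal (n + 1) v hcard hv hv0
    have hsuppe : ∀ s, e s ≠ 0 → v s ≠ 0 := by
      intro s hes hvs
      exact hes ((hec s).2 hvs)
    have hTe : (suppF e).Nonempty := by
      obtain ⟨s, hs⟩ : ∃ s, e s ≠ 0 := by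
        by_contra h
        push_neg at h
        exact he.2.1 (funext h)
      exact ⟨s, mem_suppF.2 hs⟩
    obtain ⟨sm, hsmT, hminr⟩ := (suppF e).exists_min_image (fun s => v s / e s) hTe
    have hesm : e sm ≠ 0 := mem_suppF.1 hsmT
    have hvsm : v sm ≠ 0 := hsuppe sm hesm
    have hprod : 0 < e sm * v sm :=
      lt_of_le_of_ne (hec sm).1 (Ne.symm (mul_ne_zero hesm hvsm))
    set lam : ℝ := v sm / e sm with hlam
    have hlampos : 0 < lam := by
      rw [hlam]
      have : v sm / e sm = (e sm * v sm) / (e sm * e sm) := by field_simp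
      rw [this]
      exact div_pos hprod (mul_self_pos.2 hesm)
    set v' : S → ℝ := v - lam • e with hv'
    have happ : ∀ s, v' s = v s - lam * e s := fun s => rfl
    have hv'V : v' ∈ V := V.sub_mem hv (V.smul_mem _ he.1)
    have hconf : Conformal v v' := by
      intro s
      by_cases hes : e s = 0
      · exact ⟨by rw [happ, hes]; ring_nf; positivity,
          fun h => by rw [happ, hes, h]; ring⟩
      · have hvs : v s ≠ 0 := hsuppe s hes
        refine ⟨?_, fun h => absurd h hvs⟩
        have hratio : lam ≤ v s / e s := hminr s (mem_suppF.2 hes)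
        have hprods : 0 < e s * v s :=
          lt_of_le_of_ne (hec s).1 (Ne.symm (mul_ne_zero hes hvs))
        have hkey : (v s / e s) * (e s * v s) = v s * v s := by field_simp
        have h2 : lam * (e s * v s) ≤ v s * v s := by
          rw [← hkey]
          exact mul_le_mul_of_nonneg_right hratio (le_of_lt hprods)
        rw [happ]
        nlinarith
    have hv'sm : v' sm = 0 := by
      rw [happ, hlam]
      field_simp
      ring
    have hsub : suppF v' ⊆ (suppF v).erase sm := by
      intro s hs
      have hvs' : v' s ≠ 0 := mem_suppF.1 hs
      rw [Finset.mem_erase]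
      refine ⟨fun h => by rw [h] at hvs'; exact hvs' hv'sm, mem_suppF.2 fun h => ?_⟩
      apply hvs'
      rw [happ, h, (hec s).2 h]; ring
    have hcard' : (suppF v').card ≤ n := by
      have h1 : (suppF v').card < (suppF v).card :=
        lt_of_le_of_lt (Finset.card_le_card hsub) (Finset.card_erase_lt_of_mem (mem_suppF.2 hvsm))
      omega
    obtain ⟨L', hL', hsum'⟩ := ih v' hcard' hv'V
    refine ⟨(lam • e) :: L', ?_, ?_⟩
    · intro f hf
      rcases List.mem_cons.1 hf with h | h
      · rw [h]
        exact ⟨elem_smul (ne_of_gt hlampos) he, hec.smul (le_of_lt hlampos)⟩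
      · exact ⟨(hL' f h).1, hconf.trans (hL' f h).2⟩
    · rw [List.sum_cons, hsum', hv']
      abel

variable {R : Type*} [Fintype R]


lemma orth (N : Matrix S R ℝ) {u w : S → ℝ}
    (hu : u ∈ LinearMap.ker Nᵀ.mulVecLin) (hw : w ∈ LinearMap.range N.mulVecLin) :
    ∑ s, u s * w s = 0 := by
  obtain ⟨r, hr⟩ := hw
  have hu' : Nᵀ.mulVec u = 0 := hu
  have : ∑ s, u s * w s = u ⬝ᵥ (N.mulVec r) := by
    rw [← hr]; rfl
  rw [this, Matrix.dotProduct_mulVec, ← Matrix.mulVec_transpose, hu', zero_dotProduct]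

lemma exists_member (N : Matrix S R ℝ) (i : S) (c : S → ℝ) (hc : ∀ s, 0 < c s) :
    ∃ u w : S → ℝ, u ∈ LinearMap.ker Nᵀ.mulVecLin ∧ w ∈ LinearMap.range N.mulVecLin ∧
      (u - Pi.single i 1 = fun s => w s / c s) := by
  set K := LinearMap.ker Nᵀ.mulVecLin
  set Wr := LinearMap.range N.mulVecLin
  let F : (↥K × ↥Wr) →ₗ[ℝ] (S → ℝ) :=
    { toFun := fun p => (p.1 : S → ℝ) - fun s => (p.2 : S → ℝ) s / c s
      map_add' := by
        intro p q
        funext s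
        simp only [Prod.fst_add, Prod.snd_add, Submodule.coe_add, Pi.add_apply, Pi.sub_apply]
        ring
      map_smul' := by
        intro t p
        funext s
        simp only [Prod.smul_fst, Prod.smul_snd, Submodule.coe_smul, Pi.smul_apply, Pi.sub_apply, smul_eq_mul,
          RingHom.id_apply]
        ring }
  have hinj : Function.Injective F := by
    rw [← LinearMap.ker_eq_bot]
    rw [Submodule.eq_bot_iff]
    rintro ⟨u, w⟩ hp
    have hp' : (u : S → ℝ) - (fun s => (w : S → ℝ) s / c s) = 0 := hp
    have heq : ∀ s, (u : S → ℝ) s = (w : S → ℝ) s / c s := by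
      intro s
      have := congrFun hp' s
      simp only [Pi.sub_apply, Pi.zero_apply] at this
      linarith
    have hsum : ∑ s, (u : S → ℝ) s * (w : S → ℝ) s = 0 := orth N u.2 w.2
    have hterm : ∀ s, (u : S → ℝ) s * (w : S → ℝ) s = (w : S → ℝ) s * (w : S → ℝ) s / c s := by
      intro s; rw [heq s]; ring
    rw [Finset.sum_congr rfl (fun s _ => hterm s)] at hsum
    have hw0 : ∀ s ∈ Finset.univ, (w : S → ℝ) s * (w : S → ℝ) s / c s = 0 := by
      rw [← Finset.sum_eq_zero_iff_of_nonneg]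
      · exact hsum
      · intro s _
        exact div_nonneg (mul_self_nonneg _) (hc s).le
    have hwz : (w : S → ℝ) = 0 := by
      funext s
      have := hw0 s (Finset.mem_univ s)
      have hcs := (hc s).ne'
      field_simp at this
      simpa using this
    have huz : (u : S → ℝ) = 0 := by
      funext s
      rw [heq s, congrFun hwz s]
      simp
    ext s
    · exact congrFun huz s
    · exact congrFun hwz s
  have hfr : finrank ℝ (↥K × ↥Wr) = finrank ℝ (S → ℝ) := by
    have h2 := LinearMap.finrank_range_add_finrank_ker (Nᵀ.mulVecLin)
    have h3 : finrank ℝ ↥Wr = finrank ℝ ↥(LinearMap.range Nᵀ.mulVecLin) := by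
      have h4 := Matrix.rank_transpose N
      simp only [Matrix.rank] at h4
      exact h4.symm
    rw [Module.finrank_prod, h3]
    have h5 : finrank ℝ ↥K = finrank ℝ ↥(LinearMap.ker Nᵀ.mulVecLin) := rfl
    rw [h5, ← h2]
    omega
  have hsurj := (LinearMap.injective_iff_surjective_of_finrank_eq_finrank hfr).1 hinj
  obtain ⟨⟨u, w⟩, hp⟩ := hsurj (Pi.single i 1)
  refine ⟨u, w, u.2, w.2, ?_⟩
  funext s
  have := congrFun hp s
  simp only [F, LinearMap.coe_mk, AddHom.coe_mk, Pi.sub_apply] at this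
  simp only [Pi.sub_apply]
  linarith

lemma w_eq (i : S) {u w c : S → ℝ} (hc : ∀ s, 0 < c s)
    (heq : u - Pi.single i 1 = fun s => w s / c s) :
    ∀ s, w s = c s * (u s - (Pi.single i 1 : S → ℝ) s) := by
  intro s
  have h := congrFun heq s
  simp only [Pi.sub_apply] at h
  rw [eq_div_iff (hc s).ne'] at h
  linarith

lemma single_sum (i : S) (f : S → ℝ) :
    ∑ s, f s * (Pi.single i 1 : S → ℝ) s = f i := by
  rw [Finset.sum_eq_single i]
  · simp
  · intro b _ hb
    rw [Pi.single_eq_of_ne hb]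
    ring
  · intro h
    exact absurd (Finset.mem_univ i) h

lemma member_identity (N : Matrix S R ℝ) (i : S) {u w c : S → ℝ}
    (hu : u ∈ LinearMap.ker Nᵀ.mulVecLin) (hw : w ∈ LinearMap.range N.mulVecLin)
    (hc : ∀ s, 0 < c s)
    (heq : u - Pi.single i 1 = fun s => w s / c s) :
    (∑ s, c s * (u s * u s) = c i * u i) ∧ 0 ≤ u i ∧ u i ≤ 1 := by
  have hweq := w_eq i hc heq
  have h0 := orth N hu hw
  have hterm : ∀ s, u s * w s =
      c s * (u s * u s) - (fun t => u t * c t) s * (Pi.single i 1 : S → ℝ) s := by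
    intro s
    rw [hweq s]
    simp only
    ring
  rw [Finset.sum_congr rfl (fun s _ => hterm s), Finset.sum_sub_distrib,
    single_sum i (fun t => u t * c t)] at h0
  have hid : ∑ s, c s * (u s * u s) = c i * u i := by linarith
  have hnn : ∀ s ∈ Finset.univ, (0:ℝ) ≤ c s * (u s * u s) :=
    fun s _ => mul_nonneg (hc s).le (mul_self_nonneg _)
  have hpos : 0 ≤ c i * u i := hid ▸ Finset.sum_nonneg hnn
  have hui : 0 ≤ u i := by nlinarith [hc i]
  have hsingle_le : c i * (u i * u i) ≤ ∑ s, c s * (u s * u s) :=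
    Finset.single_le_sum hnn (Finset.mem_univ i)
  rw [hid] at hsingle_le
  have h1 : u i ≤ 1 := by
    by_contra hgt
    push_neg at hgt
    have h6 : 0 < u i := by linarith
    have h7 : c i * u i * 1 < c i * u i * u i :=
      mul_lt_mul_of_pos_left hgt (mul_pos (hc i) h6)
    nlinarith [h7]
  exact ⟨hid, hui, h1⟩

lemma member_proj (N : Matrix S R ℝ) (i : S) {u w c : S → ℝ}
    (hu : u ∈ LinearMap.ker Nᵀ.mulVecLin) (hw : w ∈ LinearMap.range N.mulVecLin)
    (hc : ∀ s, 0 < c s)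
    (heq : u - Pi.single i 1 = fun s => w s / c s)
    {v : S → ℝ} (hv : v ∈ LinearMap.ker Nᵀ.mulVecLin) :
    ∑ s, c s * ((v s - u s) * (v s - u s)) ≤
      ∑ s, c s * ((v s - (Pi.single i 1 : S → ℝ) s) * (v s - (Pi.single i 1 : S → ℝ) s)) := by
  have hweq := w_eq i hc heq
  have hcross : ∑ s, c s * ((v s - u s) * (u s - (Pi.single i 1 : S → ℝ) s)) = 0 := by
    have h1 : ∀ s, c s * ((v s - u s) * (u s - (Pi.single i 1 : S → ℝ) s)) =
        v s * w s - u s * w s := by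
      intro s
      rw [hweq s]
      ring
    rw [Finset.sum_congr rfl (fun s _ => h1 s), Finset.sum_sub_distrib,
      orth N hv hw, orth N hu hw]
    ring
  have hexp : ∀ s, c s * ((v s - (Pi.single i 1 : S → ℝ) s) * (v s - (Pi.single i 1 : S → ℝ) s)) =
      c s * ((v s - u s) * (v s - u s)) +
      c s * ((u s - (Pi.single i 1 : S → ℝ) s) * (u s - (Pi.single i 1 : S → ℝ) s)) +
      2 * (c s * ((v s - u s) * (u s - (Pi.single i 1 : S → ℝ) s))) := by
    intro s; ring
  rw [Finset.sum_congr rfl (fun s _ => hexp s)]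
  rw [Finset.sum_add_distrib, Finset.sum_add_distrib, ← Finset.mul_sum, hcross]
  have hnn : (0:ℝ) ≤
      ∑ s, c s * ((u s - (Pi.single i 1 : S → ℝ) s) * (u s - (Pi.single i 1 : S → ℝ) s)) :=
    Finset.sum_nonneg fun s _ => mul_nonneg (hc s).le (mul_self_nonneg _)
  linarith

lemma exists_bound (N : Matrix S R ℝ) (i : S) {ub : S → ℝ}
    (hub : IsElementary (LinearMap.ker Nᵀ.mulVecLin) ub) (hubi : ub i = 1) :
    ∃ C : ℝ, 0 < C ∧ ∀ v : S → ℝ, v ∈ LinearMap.ker Nᵀ.mulVecLin →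
      ∀ b : ℝ, 0 ≤ b → (∀ s, (ub s = 0 ∨ s = i) → |v s| ≤ b) → ∀ s', |v s'| ≤ C * b := by
  classical
  let F : ↥(LinearMap.ker Nᵀ.mulVecLin) →ₗ[ℝ] (S → ℝ) :=
    { toFun := fun v => fun s => if ub s = 0 ∨ s = i then (v : S → ℝ) s else 0
      map_add' := by
        intro p q
        funext s
        by_cases h : ub s = 0 ∨ s = i <;> simp [h]
      map_smul' := by
        intro t p
        funext s
        by_cases h : ub s = 0 ∨ s = i <;> simp [h] }
  have hFker : LinearMap.ker F = ⊥ := by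
    rw [Submodule.eq_bot_iff]
    rintro v hv
    have hv' : ∀ s, (ub s = 0 ∨ s = i) → (v : S → ℝ) s = 0 := by
      intro s hs
      have := congrFun (show F v = 0 from hv) s
      simpa [F, hs] using this
    have hss : Function.support (v : S → ℝ) ⊆ Function.support ub := by
      intro s hs
      rw [Function.mem_support] at hs ⊢
      intro h0
      exact hs (hv' s (Or.inl h0))
    obtain ⟨t, ht⟩ := elem_proportional hub v.2 hss
    have hvi : (v : S → ℝ) i = 0 := hv' i (Or.inr rfl)
    have ht0 : t = 0 := by
      have h2 := congrFun ht i
      rw [hvi] at h2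
      simp only [Pi.smul_apply, hubi, smul_eq_mul, mul_one] at h2
      exact h2.symm
    have hv0 : (v : S → ℝ) = 0 := by rw [ht, ht0]; simp
    exact Subtype.ext hv0
  obtain ⟨C, hCpos, hanti⟩ := F.exists_antilipschitzWith hFker
  refine ⟨(C : ℝ), by exact_mod_cast hCpos, ?_⟩
  intro v hv b hb hbnd s'
  set vv : ↥(LinearMap.ker Nᵀ.mulVecLin) := ⟨v, hv⟩ with hvv
  have h1 : ‖vv‖ ≤ (C : ℝ) * ‖F vv‖ := by
    have := hanti.le_mul_dist vv 0
    simpa [dist_zero_right, map_zero] using this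
  have h2 : ‖F vv‖ ≤ b := by
    rw [pi_norm_le_iff_of_nonneg hb]
    intro s
    by_cases h : ub s = 0 ∨ s = i
    · simpa [F, hvv, h, Real.norm_eq_abs] using hbnd s h
    · simp [F, h, hb]
  have h3 : |v s'| ≤ ‖vv‖ := by
    have h4 := norm_le_pi_norm (v : S → ℝ) s'
    rw [Real.norm_eq_abs] at h4
    have h5 : ‖vv‖ = ‖(v : S → ℝ)‖ := rfl
    rw [h5]
    exact h4
  calc |v s'| ≤ ‖vv‖ := h3
    _ ≤ (C : ℝ) * ‖F vv‖ := h1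
    _ ≤ (C : ℝ) * b := mul_le_mul_of_nonneg_left h2 (by positivity)
def RHSmem (N : Matrix S R ℝ) (i o : S) (x : ℝ) : Prop :=
  ∃ u w cbar : S → ℝ,
    u ∈ LinearMap.ker Nᵀ.mulVecLin ∧
    w ∈ LinearMap.range N.mulVecLin ∧
    (∀ s, 0 < cbar s) ∧
    (u - Pi.single i 1 = fun s => w s / cbar s) ∧
    x = u o

lemma approx_elem (N : Matrix S R ℝ) (i o : S) {ub : S → ℝ}
    (hub : IsElementary (LinearMap.ker Nᵀ.mulVecLin) ub) (hubi : ub i = 1) :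
    ∀ δ : ℝ, 0 < δ → ∃ x, RHSmem N i o x ∧ ub o - δ ≤ x := by
  classical
  obtain ⟨C, hC, hbound⟩ := exists_bound N i hub hubi
  intro δ hδ
  set A : ℝ := ∑ s, (ub s - (Pi.single i 1 : S → ℝ) s) * (ub s - (Pi.single i 1 : S → ℝ) s)
    with hA
  have hA0 : 0 ≤ A := Finset.sum_nonneg fun s _ => mul_self_nonneg _
  set ε : ℝ := δ ^ 2 / (C ^ 2 * A + 1) with hε
  have hden : 0 < C ^ 2 * A + 1 := by positivity
  have hεpos : 0 < ε := by positivity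
  set c : S → ℝ := fun s => if ub s = 0 ∨ s = i then 1 else ε with hcdef
  have hc : ∀ s, 0 < c s := by
    intro s
    by_cases h : ub s = 0 ∨ s = i <;> simp [hcdef, h, hεpos]
  obtain ⟨u, w, hu, hw, heq⟩ := exists_member N i c hc
  refine ⟨u o, ⟨u, w, c, hu, hw, hc, heq, rfl⟩, ?_⟩
  have hproj := member_proj N i hu hw hc heq hub.1
  have hRHS : ∑ s, c s * ((ub s - (Pi.single i 1 : S → ℝ) s) *
      (ub s - (Pi.single i 1 : S → ℝ) s)) = ε * A := by
    rw [hA, Finset.mul_sum]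
    apply Finset.sum_congr rfl
    intro s _
    by_cases hzero : ub s - (Pi.single i 1 : S → ℝ) s = 0
    · rw [hzero]; ring
    · have hcs : c s = ε := by
        rw [hcdef]
        simp only
        rw [if_neg]
        rintro (h1 | h2)
        · apply hzero
          have hsi : s ≠ i := by
            rintro rfl
            rw [h1] at hubi
            exact one_ne_zero hubi.symm
          rw [h1, Pi.single_eq_of_ne hsi]
          ring
        · apply hzero
          subst h2
          rw [hubi, Pi.single_eq_same]
          ring
      rw [hcs]
  rw [hRHS] at hproj
  set b : ℝ := Real.sqrt (ε * A) with hb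
  have hb0 : 0 ≤ b := Real.sqrt_nonneg _
  have hsV : ub - u ∈ LinearMap.ker Nᵀ.mulVecLin := Submodule.sub_mem _ hub.1 hu
  have hbnd : ∀ s, (ub s = 0 ∨ s = i) → |(ub - u) s| ≤ b := by
    intro s hs
    have hcs : c s = 1 := by rw [hcdef]; simp [hs]
    have hterm : c s * ((ub s - u s) * (ub s - u s)) ≤ ε * A := by
      calc c s * ((ub s - u s) * (ub s - u s)) ≤
          ∑ t, c t * ((ub t - u t) * (ub t - u t)) :=
            Finset.single_le_sum (f := fun t => c t * ((ub t - u t) * (ub t - u t)))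
              (fun t _ => mul_nonneg (hc t).le (mul_self_nonneg _)) (Finset.mem_univ s)
        _ ≤ ε * A := hproj
    rw [hcs, one_mul] at hterm
    have : |(ub - u) s| = Real.sqrt ((ub s - u s) * (ub s - u s)) := by
      rw [← Real.sqrt_mul_self (abs_nonneg ((ub - u) s))]
      congr 1
      simp only [Pi.sub_apply]
      rw [abs_mul_abs_self]
    rw [this, hb]
    exact Real.sqrt_le_sqrt hterm
  have hvo := hbound (ub - u) hsV b hb0 hbnd o
  have hCb : C * b < δ := by
    have h1 : C * b = Real.sqrt (C ^ 2 * (ε * A)) := by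
      rw [hb, ← Real.sqrt_sq hC.le, ← Real.sqrt_mul (sq_nonneg C)]
      rw [Real.sqrt_sq hC.le]
    have h2 : C ^ 2 * (ε * A) < δ ^ 2 := by
      have h3 : C ^ 2 * (ε * A) = (C ^ 2 * A) * δ ^ 2 / (C ^ 2 * A + 1) := by
        rw [hε]; ring
      rw [h3, div_lt_iff₀ hden]
      nlinarith [sq_nonneg δ, sq_nonneg C, hA0, hδ]
    rw [h1]
    calc Real.sqrt (C ^ 2 * (ε * A)) < Real.sqrt (δ ^ 2) :=
        Real.sqrt_lt_sqrt (by positivity) h2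
      _ = δ := Real.sqrt_sq hδ.le
  have habs : |ub o - u o| < δ := by
    have : (ub - u) o = ub o - u o := rfl
    rw [this] at hvo
    linarith [hvo]
  have := abs_lt.1 habs
  linarith [this.2]

lemma approx_zero (N : Matrix S R ℝ) (i o : S) (hio : i ≠ o) :
    ∀ δ : ℝ, 0 < δ → ∃ x, RHSmem N i o x ∧ -δ ≤ x := by
  classical
  intro δ hδ
  set c : S → ℝ := fun s => if s = o then 1 / (δ * δ) else 1 with hcdef
  have hc : ∀ s, 0 < c s := by
    intro s
    by_cases h : s = o <;> simp [hcdef, h] <;> positivity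
  obtain ⟨u, w, hu, hw, heq⟩ := exists_member N i c hc
  refine ⟨u o, ⟨u, w, c, hu, hw, hc, heq, rfl⟩, ?_⟩
  obtain ⟨hid, hui0, hui1⟩ := member_identity N i hu hw hc heq
  have hci : c i = 1 := by rw [hcdef]; simp [hio]
  have hco : c o = 1 / (δ * δ) := by rw [hcdef]; simp
  have hterm : c o * (u o * u o) ≤ 1 := by
    calc c o * (u o * u o) ≤ ∑ s, c s * (u s * u s) :=
        Finset.single_le_sum (fun t _ => mul_nonneg (hc t).le (mul_self_nonneg _))
          (Finset.mem_univ o)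
      _ = c i * u i := hid
      _ ≤ 1 := by rw [hci]; linarith
  rw [hco] at hterm
  have hsq : u o * u o ≤ δ * δ := by
    have h2 := mul_le_mul_of_nonneg_left hterm (mul_self_nonneg δ)
    have h3 : δ * δ * (1 / (δ * δ) * (u o * u o)) = u o * u o := by
      field_simp
    rw [h3, mul_one] at h2
    exact h2
  nlinarith [sq_nonneg (u o + δ)]

lemma list_sum_le (i o : S) (M : ℝ) :
    ∀ L : List (S → ℝ), (∀ e ∈ L, e o ≤ M * e i) → (L.sum) o ≤ M * (L.sum) i := by
  intro L
  induction L with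
  | nil => intro _; simp
  | cons f L ih =>
    intro h
    have h1 : (f :: L).sum = f + L.sum := List.sum_cons
    rw [h1]
    have h2 := ih (fun e he => h e (List.mem_cons_of_mem f he))
    have h3 := h f List.mem_cons_self
    simp only [Pi.add_apply]
    rw [mul_add]
    linarith

lemma rhs_bound (N : Matrix S R ℝ) (i o : S) (M : ℝ) (hM0 : 0 ≤ M)
    (hMub : ∀ e : S → ℝ, IsElementary (LinearMap.ker Nᵀ.mulVecLin) e → e i = 1 → e o ≤ M) :
    ∀ x, RHSmem N i o x → x ≤ M := by
  rintro x ⟨u, w, c, hu, hw, hc, heq, rfl⟩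
  obtain ⟨hid, hui0, hui1⟩ := member_identity N i hu hw hc heq
  obtain ⟨L, hL, hLsum⟩ := conformal_decomposition (V := LinearMap.ker Nᵀ.mulVecLin)
    (suppF u).card u le_rfl hu
  have hkey : ∀ e ∈ L, e o ≤ M * e i := by
    intro e heL
    obtain ⟨hel, hconf⟩ := hL e heL
    have horth : ∑ s, e s * w s = 0 := orth N hel.1 hw
    have hweq := w_eq i hc heq
    have hterm : ∀ s, e s * w s =
        c s * (e s * u s) - (fun t => e t * c t) s * (Pi.single i 1 : S → ℝ) s := by
      intro s
      rw [hweq s]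
      simp only
      ring
    rw [Finset.sum_congr rfl (fun s _ => hterm s), Finset.sum_sub_distrib,
      single_sum i (fun t => e t * c t)] at horth
    have hid2 : ∑ s, c s * (e s * u s) = c i * e i := by
      linear_combination horth
    have hnn : ∀ s ∈ Finset.univ, (0:ℝ) ≤ c s * (e s * u s) :=
      fun s _ => mul_nonneg (hc s).le (hconf s).1
    have hei_ne : e i ≠ 0 := by
      intro hei
      have hsum0 : ∑ s, c s * (e s * u s) = 0 := by rw [hid2, hei]; ring
      have hall := (Finset.sum_eq_zero_iff_of_nonneg hnn).1 hsum0
      have he0 : e = 0 := by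
        funext s
        have hs := hall s (Finset.mem_univ s)
        by_cases hus : u s = 0
        · exact (hconf s).2 hus
        · have : e s * u s = 0 := by
            have := mul_eq_zero.1 hs
            rcases this with h | h
            · exact absurd h (hc s).ne'
            · exact h
          exact (mul_eq_zero.1 this).resolve_right hus
      exact hel.2.1 he0
    have hui_pos : 0 < u i := by
      rcases lt_or_eq_of_le hui0 with h | h
      · exact h
      · exact absurd ((hconf i).2 h.symm) hei_ne
    have hei_pos : 0 < e i := by
      have := (hconf i).1
      rcases lt_or_eq_of_le (le_of_not_gt fun hneg : e i < 0 => by nlinarith) with h | h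
      · exact h
      · exact absurd h.symm hei_ne
    have helem' : IsElementary (LinearMap.ker Nᵀ.mulVecLin) ((e i)⁻¹ • e) :=
      elem_smul (inv_ne_zero hei_ne) hel
    have h1 : ((e i)⁻¹ • e) i = 1 := by
      simp only [Pi.smul_apply, smul_eq_mul]
      exact inv_mul_cancel₀ hei_ne
    have h2 := hMub _ helem' h1
    have h3 : ((e i)⁻¹ • e) o = (e i)⁻¹ * e o := rfl
    rw [h3] at h2
    calc e o = e i * ((e i)⁻¹ * e o) := by field_simp
      _ ≤ e i * M := mul_le_mul_of_nonneg_left h2 hei_pos.le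
      _ = M * e i := mul_comm _ _
  have hsum := list_sum_le i o M L hkey
  rw [hLsum] at hsum
  calc u o ≤ M * u i := hsum
    _ ≤ M * 1 := mul_le_mul_of_nonneg_left hui1 hM0
    _ = M := mul_one M


end SupAux

open SupAux

/-- Lemma 3.9 (`lem:u_o`): the supremum of achievable values `u_o` is at least the supremum of
`u_o` over elementary vectors `u ∈ W^⊥` with `u_i = 1` (together with `0`). -/

theorem sup_ge_sup_elementary
    {S R : Type*} [Fintype S] [Fintype R] [DecidableEq S]
    (N : Matrix S R ℝ) (i o : S) (hio : i ≠ o) :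
    sSup ({x : ℝ | ∃ u : S → ℝ,
        IsElementary (LinearMap.ker Nᵀ.mulVecLin) u ∧ u i = 1 ∧ x = u o} ∪ {0}) ≤
    sSup {x : ℝ | ∃ u w cbar : S → ℝ,
        u ∈ LinearMap.ker Nᵀ.mulVecLin ∧
        w ∈ LinearMap.range N.mulVecLin ∧
        (∀ s, 0 < cbar s) ∧
        (u - Pi.single i 1 = fun s => w s / cbar s) ∧
        x = u o} := by
  classical
  set K := LinearMap.ker Nᵀ.mulVecLin with hK
  set E : Set (S → ℝ) := {u | IsElementary K u ∧ u i = 1} with hE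
  set LHSset : Set ℝ :=
    {x : ℝ | ∃ u : S → ℝ, IsElementary K u ∧ u i = 1 ∧ x = u o} ∪ {0} with hLHS
  set RHSset : Set ℝ := {x : ℝ | RHSmem N i o x} with hRHS
  show sSup LHSset ≤ sSup RHSset
  -- E is finite
  have hEfin : E.Finite := by
    apply Set.Finite.of_finite_image (f := Function.support)
    · exact Set.toFinite _
    · intro u hu u' hu' hsupp
      obtain ⟨huel, hui⟩ := hu
      obtain ⟨hu'el, hu'i⟩ := hu'
      obtain ⟨t, ht⟩ := elem_proportional huel hu'el.1 (le_of_eq hsupp.symm)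
      have : t = 1 := by
        have h1 := congrFun ht i
        rw [hu'i] at h1
        simpa [Pi.smul_apply, hui] using h1.symm
      rw [ht, this, one_smul]
  have hLfin : LHSset.Finite := by
    rw [hLHS]
    apply Set.Finite.union
    · have himg : {x : ℝ | ∃ u : S → ℝ, IsElementary K u ∧ u i = 1 ∧ x = u o} =
          (fun u : S → ℝ => u o) '' E := by
        ext x
        constructor
        · rintro ⟨u, h1, h2, h3⟩
          exact ⟨u, ⟨h1, h2⟩, h3.symm⟩
        · rintro ⟨u, ⟨h1, h2⟩, h3⟩
          exact ⟨u, h1, h2, h3.symm⟩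
      rw [himg]
      exact hEfin.image _
    · exact Set.finite_singleton 0
  have hLne : LHSset.Nonempty := ⟨0, Or.inr rfl⟩
  have hLbdd : BddAbove LHSset := hLfin.bddAbove
  set m : ℝ := sSup LHSset with hm
  have hmmem : m ∈ LHSset := hLne.csSup_mem hLfin
  have hm0 : 0 ≤ m := le_csSup hLbdd (Or.inr rfl)
  have hMub : ∀ e : S → ℝ, IsElementary K e → e i = 1 → e o ≤ m := by
    intro e he hei
    exact le_csSup hLbdd (Or.inl ⟨e, he, hei, rfl⟩)
  have hub : ∀ x ∈ RHSset, x ≤ m := fun x hx => rhs_bound N i o m hm0 hMub x hx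
  have hRbdd : BddAbove RHSset := ⟨m, hub⟩
  have happrox : ∀ δ : ℝ, 0 < δ → ∃ x ∈ RHSset, m - δ ≤ x := by
    intro δ hδ
    rcases hmmem with ⟨ub, hubel, hubi, hmo⟩ | hm0'
    · obtain ⟨x, hx, hxge⟩ := approx_elem N i o hubel hubi δ hδ
      exact ⟨x, hx, by rw [hmo]; exact hxge⟩
    · obtain ⟨x, hx, hxge⟩ := approx_zero N i o hio δ hδ
      refine ⟨x, hx, ?_⟩
      have : m = 0 := hm0'
      rw [this]
      linarith
  by_contra hcon
  push_neg at hcon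
  have hδ : 0 < (m - sSup RHSset) / 2 := by linarith
  obtain ⟨x, hx, hxge⟩ := happrox _ hδ
  have hxle : x ≤ sSup RHSset := le_csSup hRbdd hx
  linarith
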